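/- arXiv:1302.1986 — 4 statements merged into one kernel-verified Lean document; each statement's English description precedes it below -/
import Mathlib

section
/- Let A(x) and G(x) be formal power series with zero constant term over a commutative ring, with compositae A^Δ(n,k) = [x^n]A(x)^k and G^Δ(n,k) = [x^n]G(x)^k. Then the composita of the composition F(x) = G(A(x)) satisfies F^Δ(n,k) = Σ_{m=k}^{n} A^Δ(n,m) · G^Δ(m,k). -/
open PowerSeries Finset

/-- Composition `G(A(x))` of formal power series, valid when `A` has zero
constant term: the `n`-th coefficient is `∑_{m=0}^{n} [x^m]G · [x^n](A^m)`. -/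
noncomputable def PSComp {R : Type*} [CommRing R] (G A : PowerSeries R) : PowerSeries R :=
  PowerSeries.mk fun n => ∑ m ∈ range (n + 1), coeff m G * coeff n (A ^ m)

lemma coeff_pow_eq_zero_aux {R : Type*} [CommRing R] {A : PowerSeries R}
    (hA : constantCoeff A = 0) {m n : ℕ} (h : n < m) : coeff n (A ^ m) = 0 := by
  have hdvd : (X : PowerSeries R) ^ m ∣ A ^ m :=
    pow_dvd_pow_of_dvd (PowerSeries.X_dvd_iff.mpr hA) m
  exact (PowerSeries.X_pow_dvd_iff.mp hdvd) n h

lemma biUnion_antidiagonal_eq {n : ℕ} :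
    (range (n + 1)).biUnion Finset.HasAntidiagonal.antidiagonal
      = (range (n + 1) ×ˢ range (n + 1)).filter (fun p => p.1 + p.2 ≤ n) := by
  ext p
  simp only [mem_biUnion, Finset.HasAntidiagonal.mem_antidiagonal, mem_filter, mem_product, mem_range,
    Nat.lt_succ_iff]
  constructor
  · rintro ⟨m, hm, rfl⟩
    omega
  · rintro ⟨⟨h1, h2⟩, h3⟩
    exact ⟨p.1 + p.2, h3, rfl⟩

lemma key_comp {R : Type*} [CommRing R] (A G : PowerSeries R)
    (hA : constantCoeff A = 0) (k n : ℕ) :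
    coeff n ((PSComp G A) ^ k)
      = ∑ m ∈ range (n + 1), coeff n (A ^ m) * coeff m (G ^ k) := by
  induction k generalizing n with
  | zero =>
      simp only [pow_zero, PowerSeries.coeff_one]
      rw [Finset.sum_eq_single 0]
      · simp
      · intro m _ hm
        simp [hm]
      · intro h
        exact absurd (mem_range.mpr (Nat.succ_pos n)) h
  | succ k ih =>
      -- coefficients of F on [0, n]
      have hcF : ∀ a : ℕ, a ≤ n →
          coeff a (PSComp G A) = ∑ j ∈ range (n + 1), coeff j G * coeff a (A ^ j) := by
        intro a ha
        rw [PSComp, coeff_mk]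
        apply Finset.sum_subset (range_subset_range.mpr (by omega))
        intro j _ hj
        rw [mem_range, Nat.lt_succ_iff, not_le] at hj
        rw [coeff_pow_eq_zero_aux hA hj, mul_zero]
      have hcFk : ∀ b : ℕ, b ≤ n →
          coeff b ((PSComp G A) ^ k)
            = ∑ i ∈ range (n + 1), coeff b (A ^ i) * coeff i (G ^ k) := by
        intro b hb
        rw [ih b]
        apply Finset.sum_subset (range_subset_range.mpr (by omega))
        intro i _ hi
        rw [mem_range, Nat.lt_succ_iff, not_le] at hi
        rw [coeff_pow_eq_zero_aux hA hi, zero_mul]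
      set g : ℕ × ℕ → R := fun p => coeff p.1 G * coeff p.2 (G ^ k) * coeff n (A ^ (p.1 + p.2))
        with hg
      have hLHS : coeff n ((PSComp G A) ^ (k + 1))
          = ∑ p ∈ range (n + 1) ×ˢ range (n + 1), g p := by
        rw [pow_succ', PowerSeries.coeff_mul]
        have step1 : ∀ p ∈ Finset.HasAntidiagonal.antidiagonal n,
            coeff p.1 (PSComp G A) * coeff p.2 ((PSComp G A) ^ k)
              = ∑ q ∈ range (n + 1) ×ˢ range (n + 1),
                  (coeff q.1 G * coeff q.2 (G ^ k))
                    * (coeff p.1 (A ^ q.1) * coeff p.2 (A ^ q.2)) := by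
          intro p hp
          rw [Finset.HasAntidiagonal.mem_antidiagonal] at hp
          rw [hcF p.1 (by omega), hcFk p.2 (by omega), Finset.sum_mul_sum]
          rw [← Finset.sum_product']
          apply Finset.sum_congr rfl
          intro q _
          ring
        rw [Finset.sum_congr rfl step1, Finset.sum_comm]
        apply Finset.sum_congr rfl
        intro q _
        rw [← Finset.mul_sum, hg]
        simp only
        congr 1
        rw [pow_add, PowerSeries.coeff_mul]
      rw [hLHS]
      -- RHS
      have hRHS : ∑ m ∈ range (n + 1), coeff n (A ^ m) * coeff m (G ^ (k + 1))
          = ∑ p ∈ (range (n + 1)).biUnion Finset.HasAntidiagonal.antidiagonal, g p := by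
        rw [Finset.sum_biUnion]
        · apply Finset.sum_congr rfl
          intro m _
          rw [pow_succ', PowerSeries.coeff_mul, Finset.mul_sum]
          apply Finset.sum_congr rfl
          intro q hq
          rw [Finset.HasAntidiagonal.mem_antidiagonal] at hq
          rw [hg]
          simp only
          rw [hq]
          ring
        · intro m₁ _ m₂ _ hne
          apply Finset.disjoint_left.mpr
          intro p hp1 hp2
          rw [Finset.HasAntidiagonal.mem_antidiagonal] at hp1 hp2
          exact hne (hp1 ▸ hp2 ▸ rfl)
      rw [hRHS, biUnion_antidiagonal_eq]
      symm
      apply Finset.sum_subset (Finset.filter_subset _ _)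
      intro p hp hnp
      rw [Finset.mem_filter, not_and, not_le] at hnp
      rw [hg]
      simp only
      rw [coeff_pow_eq_zero_aux hA (hnp hp), mul_zero]

theorem stmt_3 {R : Type*} [CommRing R] (A G : PowerSeries R)
    (hA : constantCoeff A = 0) (hG : constantCoeff G = 0)
    (F : PowerSeries R) (hF : F = PSComp G A) (n k : ℕ) :
    coeff n (F ^ k) = ∑ m ∈ Icc k n, coeff n (A ^ m) * coeff m (G ^ k) := by
  rw [hF, key_comp A G hA]
  symm
  apply Finset.sum_subset
  · intro m hm
    rw [mem_Icc] at hm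
    rw [mem_range]
    omega
  · intro m hm hnot
    rw [mem_range, Nat.lt_succ_iff] at hm
    rw [mem_Icc, not_and, not_le] at hnot
    have hk : m < k := by
      by_contra h
      exact absurd hm (not_le.mpr (hnot (le_of_not_gt h)))
    rw [coeff_pow_eq_zero_aux hG hk, mul_zero]
end

section
/- Let A(x) be a formal power series with zero constant term over a commutative ring, satisfying A(A(x)) = F(x), and let A^Δ and F^Δ denote the respective compositae. Then for all n > k ≥ 1: A^Δ(n,k)·(A^Δ(k,k) + A^Δ(n,n)) = F^Δ(n,k) − Σ_{m=k+1}^{n−1} A^Δ(n,m)·A^Δ(m,k). -/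
open PowerSeries Finset

lemma vanish {R : Type*} [CommRing R] {A : PowerSeries R} (hA : constantCoeff A = 0) :
    ∀ m n : ℕ, n < m → coeff n (A ^ m) = 0 := by
  intro m
  induction m with
  | zero => intro n h; omega
  | succ m ih =>
    intro n h
    rw [pow_succ, PowerSeries.coeff_mul]
    apply Finset.sum_eq_zero
    rintro ⟨p, q⟩ hpq
    rw [Finset.HasAntidiagonal.mem_antidiagonal] at hpq
    rcases Nat.eq_zero_or_pos q with hq | hq
    · subst hq
      simp [coeff_zero_eq_constantCoeff, hA]
    · have : p < m := by omega
      rw [ih p this, zero_mul]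

lemma coeff_psComp {R : Type*} [CommRing R] (G A : PowerSeries R) (p : ℕ) :
    coeff p (PSComp G A) = ∑ m ∈ range (p + 1), coeff m G * coeff p (A ^ m) := by
  simp [PSComp]

lemma coeff_aeval {R : Type*} [CommRing R] {A : PowerSeries R} (hA : constantCoeff A = 0)
    (P : Polynomial R) (n : ℕ) :
    coeff n (Polynomial.aeval A P) =
      ∑ i ∈ range (n + 1), P.coeff i * coeff n (A ^ i) := by
  rw [Polynomial.aeval_eq_sum_range' (n := max (P.natDegree + 1) (n + 1))
      (lt_of_lt_of_le (Nat.lt_succ_self _) (le_max_left _ _)), map_sum]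
  simp only [LinearMap.map_smul, smul_eq_mul]
  refine (Finset.sum_subset ?_ ?_).symm
  · intro i hi
    simp only [Finset.mem_range] at hi ⊢
    omega
  · intro i hi hni
    simp only [Finset.mem_range] at hi hni
    rw [vanish hA i n (by omega), mul_zero]

lemma trunc_aeval {R : Type*} [CommRing R] {A : PowerSeries R} (hA : constantCoeff A = 0)
    (G : PowerSeries R) (n p : ℕ) (hp : p ≤ n) :
    coeff p (Polynomial.aeval A (trunc (n + 1) G)) = coeff p (PSComp G A) := by
  rw [coeff_aeval hA, coeff_psComp]
  apply Finset.sum_congr rfl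
  intro i hi
  rw [Finset.mem_range] at hi
  rw [coeff_trunc, if_pos (by omega)]

lemma psComp_mul {R : Type*} [CommRing R] {A : PowerSeries R} (hA : constantCoeff A = 0)
    (G H : PowerSeries R) :
    PSComp (G * H) A = PSComp G A * PSComp H A := by
  ext n
  rw [← trunc_aeval hA (G * H) n n le_rfl]
  have key : ∀ i ≤ n, (trunc (n + 1) (G * H)).coeff i
      = (trunc (n + 1) G * trunc (n + 1) H).coeff i := by
    intro i hi
    rw [coeff_trunc, if_pos (by omega), Polynomial.coeff_mul, PowerSeries.coeff_mul]
    apply Finset.sum_congr rfl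
    rintro ⟨a, b⟩ hab
    rw [Finset.HasAntidiagonal.mem_antidiagonal] at hab
    rw [coeff_trunc, coeff_trunc, if_pos (by omega), if_pos (by omega)]
  have h2 : coeff n (Polynomial.aeval A (trunc (n + 1) (G * H)))
      = coeff n (Polynomial.aeval A (trunc (n + 1) G * trunc (n + 1) H)) := by
    rw [coeff_aeval hA, coeff_aeval hA]
    apply Finset.sum_congr rfl
    intro i hi
    rw [Finset.mem_range] at hi
    rw [key i (by omega)]
  rw [h2, map_mul, PowerSeries.coeff_mul, PowerSeries.coeff_mul]
  apply Finset.sum_congr rfl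
  rintro ⟨p, q⟩ hpq
  rw [Finset.HasAntidiagonal.mem_antidiagonal] at hpq
  rw [trunc_aeval hA G n p (by omega), trunc_aeval hA H n q (by omega)]

lemma psComp_one {R : Type*} [CommRing R] (A : PowerSeries R) :
    PSComp 1 A = 1 := by
  ext n
  rw [coeff_psComp]
  rw [Finset.sum_eq_single 0]
  · simp
  · intro m hm hm0
    simp [PowerSeries.coeff_one, hm0]
  · intro h
    simp at h

lemma psComp_pow {R : Type*} [CommRing R] {A : PowerSeries R} (hA : constantCoeff A = 0)
    (k : ℕ) : PSComp (A ^ k) A = (PSComp A A) ^ k := by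
  induction k with
  | zero => simpa using psComp_one A
  | succ k ih => rw [pow_succ, pow_succ, psComp_mul hA, ih]

theorem stmt_4 {R : Type*} [CommRing R] (A F : PowerSeries R)
    (hA : constantCoeff A = 0) (hAF : PSComp A A = F)
    (n k : ℕ) (hk : 1 ≤ k) (hnk : k < n) :
    coeff n (A ^ k) * (coeff k (A ^ k) + coeff n (A ^ n)) =
      coeff n (F ^ k) - ∑ m ∈ Ioo k n, coeff n (A ^ m) * coeff m (A ^ k) := by
  have hF : coeff n (F ^ k) = ∑ m ∈ range (n + 1), coeff m (A ^ k) * coeff n (A ^ m) := by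
    rw [← hAF, ← psComp_pow hA k, coeff_psComp]
  have hres : ∑ m ∈ range (n + 1), coeff m (A ^ k) * coeff n (A ^ m)
      = ∑ m ∈ Icc k n, coeff m (A ^ k) * coeff n (A ^ m) := by
    refine (Finset.sum_subset ?_ ?_).symm
    · intro m hm
      rw [Finset.mem_Icc] at hm
      rw [Finset.mem_range]
      omega
    · intro m hm hm'
      rw [Finset.mem_range] at hm
      rw [Finset.mem_Icc] at hm'
      rw [vanish hA k m (by omega), zero_mul]
  have hsplit : ∑ m ∈ Icc k n, coeff m (A ^ k) * coeff n (A ^ m)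
      = coeff k (A ^ k) * coeff n (A ^ k)
        + (coeff n (A ^ k) * coeff n (A ^ n)
          + ∑ m ∈ Ioo k n, coeff m (A ^ k) * coeff n (A ^ m)) := by
    rw [← Finset.Ioc_insert_left (le_of_lt hnk), Finset.sum_insert (by simp),
      ← Finset.Ioo_insert_right hnk, Finset.sum_insert (by simp)]

  have hcomm : ∑ m ∈ Ioo k n, coeff m (A ^ k) * coeff n (A ^ m)
      = ∑ m ∈ Ioo k n, coeff n (A ^ m) * coeff m (A ^ k) := by
    apply Finset.sum_congr rfl
    intro m _
    ring
  rw [hF, hres, hsplit, hcomm]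
  ring
end

section
/- Let F(x) = Σ_{n≥1} f(n)x^n be a formal power series over ℚ with f(1) = 1 and zero constant term. Then there exists a unique formal power series A(x) over ℚ with zero constant term, linear coefficient 1, and A(A(x)) = F(x). -/
open PowerSeries Finset

private lemma coeff_pow_zero' {A : PowerSeries ℚ} (hA : constantCoeff A = 0)
    {m j : ℕ} (h : j < m) : coeff j (A ^ m) = 0 :=
  PowerSeries.X_pow_dvd_iff.mp
    (pow_dvd_pow_of_dvd (PowerSeries.X_dvd_iff.mpr hA) m) j h

private lemma coeff_pow_self' {A : PowerSeries ℚ} (hA : constantCoeff A = 0) :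
    ∀ n : ℕ, coeff n (A ^ n) = (coeff 1 A) ^ n := by
  intro n
  induction n with
  | zero => simp
  | succ n ih =>
    rw [pow_succ, PowerSeries.coeff_mul]
    rw [Finset.sum_eq_single (n, 1)]
    · simp [ih, pow_succ, mul_comm]
    · rintro ⟨i, j⟩ hij hne
      rw [Finset.HasAntidiagonal.mem_antidiagonal] at hij
      rcases Nat.lt_or_ge i n with hi | hi
      · have : coeff i (A ^ n) = 0 := coeff_pow_zero' hA hi
        simp [this]
      · have hj : j ≤ 1 := by omega
        interval_cases j
        · have : coeff 0 A = 0 := by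
            rwa [PowerSeries.coeff_zero_eq_constantCoeff]
          simp [this]
        · have : i = n := by omega
          exact absurd (by rw [this]) hne
    · intro h
      exact absurd (Finset.HasAntidiagonal.mem_antidiagonal.mpr (by omega)) h

private lemma coeff_pow_congr {A B : PowerSeries ℚ} {n : ℕ}
    (hA : constantCoeff A = 0) (hB : constantCoeff B = 0)
    (h : ∀ k < n, coeff k A = coeff k B) :
    ∀ m j, j ≤ n → (j < n ∨ 2 ≤ m) → coeff j (A ^ m) = coeff j (B ^ m) := by
  intro m
  induction m with
  | zero => intro j _ _; rfl
  | succ m ih =>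
    intro j hj hcase
    match m, ih with
    | 0, _ =>
      rcases hcase with hlt | h2
      · simpa using h j hlt
      · omega
    | m + 1, ih =>
      rw [pow_succ A (m+1), pow_succ B (m+1), PowerSeries.coeff_mul, PowerSeries.coeff_mul]
      apply Finset.sum_congr rfl
      rintro ⟨i, k⟩ hik
      rw [Finset.HasAntidiagonal.mem_antidiagonal] at hik
      by_cases hi0 : i = 0
      · subst hi0
        have hk : k = j := by omega
        subst hk
        have h1 : coeff 0 (A ^ (m + 1)) = 0 := coeff_pow_zero' hA (by omega)
        have h2 : coeff 0 (B ^ (m + 1)) = 0 := coeff_pow_zero' hB (by omega)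
        simp [h1, h2]
      · by_cases hk0 : k = 0
        · subst hk0
          have h1 : coeff 0 A = 0 := by rwa [PowerSeries.coeff_zero_eq_constantCoeff]
          have h2 : coeff 0 B = 0 := by rwa [PowerSeries.coeff_zero_eq_constantCoeff]
          simp [h1, h2]
        · have hi : coeff i (A ^ (m+1)) = coeff i (B ^ (m+1)) :=
            ih i (by omega) (Or.inl (by omega))
          have hk : coeff k A = coeff k B := h k (by omega)
          rw [hi, hk]

private lemma coeff_PSComp (A B : PowerSeries ℚ) (n : ℕ) :
    coeff n (PSComp A B) = ∑ m ∈ range (n + 1), coeff m A * coeff n (B ^ m) := by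
  simp [PSComp]

/-- the master lemma -/
private lemma master {A B : PowerSeries ℚ} {n : ℕ} (hn : 2 ≤ n)
    (hA : constantCoeff A = 0) (hB : constantCoeff B = 0)
    (h : ∀ k < n, coeff k A = coeff k B) :
    coeff n (PSComp A A) - coeff n (PSComp B B)
      = (coeff 1 A + (coeff 1 A) ^ n) * (coeff n A - coeff n B) := by
  have h1 : coeff 1 B = coeff 1 A := (h 1 (by omega)).symm
  rw [coeff_PSComp, coeff_PSComp, ← Finset.sum_sub_distrib]
  have hsub : ({1, n} : Finset ℕ) ⊆ range (n + 1) := by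
    intro x hx
    simp only [Finset.mem_insert, Finset.mem_singleton] at hx
    rcases hx with rfl | rfl <;> simp [Finset.mem_range] <;> omega
  rw [← Finset.sum_subset hsub]
  · rw [Finset.sum_pair (by omega : (1:ℕ) ≠ n)]
    rw [coeff_pow_self' hA, coeff_pow_self' hB, h1, pow_one, pow_one]
    ring
  · intro m hm hm'
    simp only [Finset.mem_insert, Finset.mem_singleton, not_or] at hm'
    rw [Finset.mem_range] at hm
    by_cases hm0 : m = 0
    · subst hm0
      have h1 : coeff 0 A = 0 := by rwa [PowerSeries.coeff_zero_eq_constantCoeff]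
      have h2 : coeff 0 B = 0 := by rwa [PowerSeries.coeff_zero_eq_constantCoeff]
      simp [h1, h2]
    · have hm2 : 2 ≤ m := by omega
      have hmn : m < n := by omega
      rw [coeff_pow_congr hA hB h m n le_rfl (Or.inr hm2), h m hmn]
      ring

/-- coefficients of the compositional square root, by strong recursion -/
private noncomputable def acoef (f : ℕ → ℚ) : ℕ → ℚ := fun n =>
  if n = 0 then 0
  else if n = 1 then 1
  else
    (f n - (coeff n)
      (PSComp (PowerSeries.mk fun k => if h : k < n then acoef f k else 0)
              (PowerSeries.mk fun k => if h : k < n then acoef f k else 0))) / 2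
  termination_by n => n
  decreasing_by all_goals omega

theorem stmt_5 (F : PowerSeries ℚ) (hF0 : constantCoeff F = 0)
    (hF1 : coeff 1 F = 1) :
    ∃! A : PowerSeries ℚ,
      constantCoeff A = 0 ∧ coeff 1 A = 1 ∧ PSComp A A = F := by
  set f : ℕ → ℚ := fun n => coeff n F with hf
  set A : PowerSeries ℚ := PowerSeries.mk (acoef f) with hAdef
  have hcoeffA : ∀ k, coeff k A = acoef f k := fun k => by simp [hAdef]
  have ha0 : acoef f 0 = 0 := by rw [acoef]; simp
  have ha1 : acoef f 1 = 1 := by rw [acoef]; simp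
  have hA0 : constantCoeff A = 0 := by
    rw [← PowerSeries.coeff_zero_eq_constantCoeff, hcoeffA, ha0]
  have hA1 : coeff 1 A = 1 := by rw [hcoeffA, ha1]
  -- coefficients 0 and 1 of any composition
  have hcomp0 : ∀ B : PowerSeries ℚ, constantCoeff B = 0 →
      coeff 0 (PSComp B B) = 0 := by
    intro B hB
    have hB0 : coeff 0 B = 0 := by rwa [PowerSeries.coeff_zero_eq_constantCoeff]
    rw [coeff_PSComp]
    simp [hB0]
  have hcomp1 : ∀ B : PowerSeries ℚ, constantCoeff B = 0 →
      coeff 1 (PSComp B B) = (coeff 1 B) ^ 2 := by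
    intro B hB
    have hB0 : coeff 0 B = 0 := by rwa [PowerSeries.coeff_zero_eq_constantCoeff]
    rw [coeff_PSComp]
    rw [Finset.sum_range_succ, Finset.sum_range_succ, Finset.sum_range_zero]
    simp [hB0, pow_two]
  -- main recursion: coeff n (PSComp A A) = f n for n ≥ 2
  have hmain : ∀ n, 2 ≤ n → coeff n (PSComp A A) = f n := by
    intro n hn
    set T : PowerSeries ℚ := PowerSeries.mk fun k => if h : k < n then acoef f k else 0
      with hTdef
    have hcoeffT : ∀ k, coeff k T = if k < n then acoef f k else 0 := fun k => by
      simp [hTdef]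
    have hT0 : constantCoeff T = 0 := by
      rw [← PowerSeries.coeff_zero_eq_constantCoeff, hcoeffT]
      simp only [if_pos (by omega : 0 < n)]
      exact ha0
    have hagree : ∀ k < n, coeff k A = coeff k T := by
      intro k hk
      rw [hcoeffA, hcoeffT, if_pos hk]
    have hTn : coeff n T = 0 := by rw [hcoeffT, if_neg (by omega)]
    have hM := master hn hA0 hT0 hagree
    rw [hA1] at hM
    simp only [one_pow] at hM
    have han : acoef f n = (f n - coeff n (PSComp T T)) / 2 := by
      rw [acoef]
      rw [if_neg (by omega), if_neg (by omega)]
    rw [hcoeffA, hTn, han] at hM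
    have := hM
    linarith [this]
  have hF00 : coeff 0 F = 0 := by
    rw [PowerSeries.coeff_zero_eq_constantCoeff]; exact hF0
  have hAF : PSComp A A = F := by
    ext n
    rcases Nat.lt_or_ge n 2 with hn | hn
    · interval_cases n
      · rw [hcomp0 A hA0, hF00]
      · rw [hcomp1 A hA0, hA1, hF1]; norm_num
    · rw [hmain n hn]
  refine ⟨A, ⟨hA0, hA1, hAF⟩, ?_⟩
  rintro B ⟨hB0, hB1, hBF⟩
  ext n
  induction n using Nat.strong_induction_on with
  | _ n ih =>
    rcases Nat.lt_or_ge n 2 with hn | hn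
    · interval_cases n
      · rw [PowerSeries.coeff_zero_eq_constantCoeff, hB0, hA0]
      · rw [hB1, hA1]
    · have hM := master hn hB0 hA0 ih
      rw [hBF, hAF, sub_self, hB1] at hM
      simp only [one_pow] at hM
      linarith
end

section
/- Let C(x) = (1 − √(1−4x))/2 be the generating function of the Catalan numbers, viewed as the formal power series satisfying C(x) = x + C(x)^2 with zero constant term. Then its composita is C^Δ(n,k) = (k/n)·binom(2n−k−1, n−1) for 1 ≤ k ≤ n; i.e., the coefficient of x^n in C(x)^k equals (k/n)·binom(2n−k−1, n−1). -/
open PowerSeries Finset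

theorem stmt_10 (Cat : PowerSeries ℚ) (h0 : constantCoeff Cat = 0)
    (hCat : Cat = X + Cat ^ 2) (n k : ℕ) (hk : 1 ≤ k) (hkn : k ≤ n) :
    coeff n (Cat ^ k) =
      ((k : ℚ) / (n : ℚ)) * ((2 * n - k - 1).choose (n - 1) : ℚ) := by
  obtain ⟨ψ, hψ⟩ := PowerSeries.X_dvd_iff.mpr h0
  -- coefficients below the diagonal vanish
  have hzero : ∀ m j : ℕ, m < j → coeff m (Cat ^ j) = 0 := by
    intro m j hmj
    rw [hψ, mul_pow, coeff_X_pow_mul', if_neg (by omega)]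
  -- constant coefficient of ψ is 1
  have hc1 : constantCoeff ψ = 1 := by
    have h1 : coeff 1 Cat = 1 := by
      nth_rewrite 1 [hCat]
      rw [map_add, hzero 1 2 (by norm_num)]
      simp
    have h2 : coeff 1 Cat = constantCoeff ψ := by
      rw [hψ]
      simpa using coeff_succ_X_mul 0 ψ
    rw [← h2, h1]
  -- diagonal coefficients are 1
  have hdiag : ∀ m : ℕ, coeff m (Cat ^ m) = 1 := by
    intro m
    rw [hψ, mul_pow, coeff_X_pow_mul', if_pos le_rfl]
    simp [coeff_zero_eq_constantCoeff, map_pow, hc1]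
  -- the fundamental recurrence
  have hrec : ∀ m j : ℕ, coeff (m + 1) (Cat ^ (j + 1)) =
      coeff m (Cat ^ j) + coeff (m + 1) (Cat ^ (j + 2)) := by
    intro m j
    have expand : Cat ^ (j + 1) = X * Cat ^ j + Cat ^ (j + 2) := by
      calc Cat ^ (j + 1) = Cat ^ j * (X + Cat ^ 2) := by rw [← hCat, pow_succ]
        _ = X * Cat ^ j + Cat ^ (j + 2) := by ring
    rw [expand, map_add, coeff_succ_X_mul]
  -- main claim in "difference of binomials" form
  have main : ∀ m : ℕ, ∀ j : ℕ, 1 ≤ j → j ≤ m →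
      coeff m (Cat ^ j) =
        ((2 * m - j - 1).choose (m - 1) : ℚ) - ((2 * m - j - 1).choose m : ℚ) := by
    intro m
    induction m using Nat.strong_induction_on with
    | _ m IH =>
      have inner : ∀ d : ℕ, ∀ j : ℕ, j + d = m → 1 ≤ j →
          coeff m (Cat ^ j) =
            ((2 * m - j - 1).choose (m - 1) : ℚ) - ((2 * m - j - 1).choose m : ℚ) := by
        intro d
        induction d with
        | zero =>
          intro j hj hj1
          obtain rfl : j = m := by omega
          rw [hdiag j]
          have e : 2 * j - j - 1 = j - 1 := by omega
          rw [e, Nat.choose_self, Nat.choose_eq_zero_of_lt (by omega : j - 1 < j)]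
          norm_num
        | succ d IHd =>
          intro j hjd hj1
          obtain ⟨a, rfl⟩ : ∃ a, j = a + 1 := ⟨j - 1, by omega⟩
          obtain rfl : m = a + d + 2 := by omega
          -- normalize the subtraction expressions in the goal
          have e2 : 2 * (a + d + 2) - (a + 1) - 1 = a + 2 * d + 2 := by omega
          have e3 : a + d + 2 - 1 = a + d + 1 := by omega
          rw [e2, e3]
          -- apply the recurrence
          have hr : coeff (a + d + 2) (Cat ^ (a + 1)) =
              coeff (a + d + 1) (Cat ^ a) + coeff (a + d + 2) (Cat ^ (a + 2)) := by
            have := hrec (a + d + 1) a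
            convert this using 3 <;> omega
          -- second term via inner IH
          have hT2 : coeff (a + d + 2) (Cat ^ (a + 2)) =
              ((a + 2 * d + 1).choose (a + d + 1) : ℚ) -
                ((a + 2 * d + 1).choose (a + d + 2) : ℚ) := by
            have := IHd (a + 2) (by omega) (by omega)
            have f2 : 2 * (a + d + 2) - (a + 2) - 1 = a + 2 * d + 1 := by omega
            have f3 : a + d + 2 - 1 = a + d + 1 := by omega
            rw [f2, f3] at this
            exact this
          rcases Nat.eq_zero_or_pos a with rfl | ha
          · -- j = 1 : first term is zero
            have hT1 : coeff (0 + d + 1) (Cat ^ 0) = 0 := by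
              simp [PowerSeries.coeff_one]
            rw [hr, hT1, hT2, zero_add]
            have p1 : (0 + 2 * d + 2).choose (0 + d + 1) =
                (2 * d + 1).choose d + (2 * d + 1).choose (d + 1) := by
              have := Nat.choose_succ_succ (2 * d + 1) d
              convert this using 2 <;> omega
            have p2 : (0 + 2 * d + 2).choose (0 + d + 2) =
                (2 * d + 1).choose (d + 1) + (2 * d + 1).choose (d + 2) := by
              have := Nat.choose_succ_succ (2 * d + 1) (d + 1)
              convert this using 2 <;> omega
            have psym : (2 * d + 1).choose d = (2 * d + 1).choose (d + 1) := by
              have := Nat.choose_symm (show d ≤ 2 * d + 1 by omega)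
              have e : 2 * d + 1 - d = d + 1 := by omega
              rw [e] at this
              exact this.symm
            have q1 : (0 + 2 * d + 1).choose (0 + d + 1) = (2 * d + 1).choose (d + 1) := by
              norm_num
            have q2 : (0 + 2 * d + 1).choose (0 + d + 2) = (2 * d + 1).choose (d + 2) := by
              norm_num
            rw [p1, p2, psym, q1, q2]
            push_cast
            ring
          · -- j ≥ 2 : first term via outer (strong) IH
            have hT1 : coeff (a + d + 1) (Cat ^ a) =
                ((a + 2 * d + 1).choose (a + d) : ℚ) -
                  ((a + 2 * d + 1).choose (a + d + 1) : ℚ) := by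
              have := IH (a + d + 1) (by omega) a (by omega) (by omega)
              have f2 : 2 * (a + d + 1) - a - 1 = a + 2 * d + 1 := by omega
              have f3 : a + d + 1 - 1 = a + d := by omega
              rw [f2, f3] at this
              exact this
            rw [hr, hT1, hT2]
            have p1 : (a + 2 * d + 2).choose (a + d + 1) =
                (a + 2 * d + 1).choose (a + d) + (a + 2 * d + 1).choose (a + d + 1) := by
              have := Nat.choose_succ_succ (a + 2 * d + 1) (a + d)
              convert this using 2 <;> omega
            have p2 : (a + 2 * d + 2).choose (a + d + 2) =
                (a + 2 * d + 1).choose (a + d + 1) + (a + 2 * d + 1).choose (a + d + 2) := by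
              have := Nat.choose_succ_succ (a + 2 * d + 1) (a + d + 1)
              convert this using 2 <;> omega
            rw [p1, p2]
            push_cast
            ring
      intro j hj1 hjm
      exact inner (m - j) j (by omega) hj1
  -- convert the difference form to the (k/n)·binom form
  have hmain := main n k hk hkn
  rw [hmain]
  have hn1 : 1 ≤ n := le_trans hk hkn
  have hcsr := Nat.choose_succ_right_eq (2 * n - k - 1) (n - 1)
  have en : n - 1 + 1 = n := by omega
  have esub : 2 * n - k - 1 - (n - 1) = n - k := by omega
  rw [en, esub] at hcsr
  -- hcsr : (2*n-k-1).choose n * n = (2*n-k-1).choose (n-1) * (n - k)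
  have hcq : ((2 * n - k - 1).choose n : ℚ) * n =
      ((2 * n - k - 1).choose (n - 1) : ℚ) * ((n : ℚ) - (k : ℚ)) := by
    have := congrArg (Nat.cast : ℕ → ℚ) hcsr
    push_cast [Nat.cast_sub hkn] at this
    linarith [this]
  have hnne : (n : ℚ) ≠ 0 := Nat.cast_ne_zero.mpr (by omega)
  field_simp
  nlinarith [hcq]
end
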